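/- Let k be an algebraically closed field of characteristic different from 2 and 3. Let f = x⁴ + g₂x² + g₃x + g₄ and f' = x⁴ + g₂'x² + g₃'x + g₄' be squarefree quartics over k with g₃ ≠ 0 and g₃' ≠ 0. If the invariant triples agree, i.e. g₂³/g₃² = g₂'³/g₃'², g₂g₄/g₃² = g₂'g₄'/g₃'², and g₄³/g₃⁴ = g₄'³/g₃'⁴, then there exists a nonzero t ∈ k with g₂' = g₂/t², g₃' = g₃/t³, and g₄' = g₄/t⁴; that is, the two normal-form Picard curves are isomorphic via the scaling x ↦ tx, y ↦ sy with s³ = t⁴. -/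

import Mathlib

open Polynomial

/-- Over an algebraically closed field, two normal-form Picard curves with
`g₃ ≠ 0` and the same invariant triple are related by the scaling
`(g₂, g₃, g₄) ↦ (g₂/t², g₃/t³, g₄/t⁴)` for some nonzero `t`, i.e. they are isomorphic via
`x ↦ tx`, `y ↦ sy` with `s³ = t⁴`. -/
theorem picard_invariants_determine_curve
    {k : Type*} [Field k] [IsAlgClosed k]
    (hchar2 : ringChar k ≠ 2) (hchar3 : ringChar k ≠ 3)
    (g₂ g₃ g₄ g₂' g₃' g₄' : k) (hg₃ : g₃ ≠ 0) (hg₃' : g₃' ≠ 0)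
    (hsf : Squarefree (X ^ 4 + C g₂ * X ^ 2 + C g₃ * X + C g₄ : k[X]))
    (hsf' : Squarefree (X ^ 4 + C g₂' * X ^ 2 + C g₃' * X + C g₄' : k[X]))
    (h₁ : g₂ ^ 3 / g₃ ^ 2 = g₂' ^ 3 / g₃' ^ 2)
    (h₂ : g₂ * g₄ / g₃ ^ 2 = g₂' * g₄' / g₃' ^ 2)
    (h₃ : g₄ ^ 3 / g₃ ^ 4 = g₄' ^ 3 / g₃' ^ 4) :
    ∃ t : k, t ≠ 0 ∧ g₂' = g₂ / t ^ 2 ∧ g₃' = g₃ / t ^ 3 ∧ g₄' = g₄ / t ^ 4 ∧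
      ∃ s : k, s ^ 3 = t ^ 4 := by
  obtain ⟨t₀, ht₀⟩ := IsAlgClosed.exists_pow_nat_eq (k := k) (g₃ / g₃') (n := 3) (by norm_num)
  have ht₀0 : t₀ ≠ 0 := by
    intro h
    rw [h] at ht₀
    simp only [ne_eq, zero_pow, OfNat.ofNat_ne_zero, not_false_iff] at ht₀
    rcases div_eq_zero_iff.mp ht₀.symm with h | h
    · exact hg₃ h
    · exact hg₃' h
  have hg3' : g₃' = g₃ / t₀ ^ 3 := by
    rw [ht₀]; field_simp
  have key1 : g₂' ^ 3 * t₀ ^ 6 = g₂ ^ 3 := by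
    have h1 := (div_eq_div_iff (pow_ne_zero 2 hg₃) (pow_ne_zero 2 hg₃')).mp h₁
    rw [hg3'] at h1
    field_simp at h1
    apply mul_right_cancel₀ (pow_ne_zero 2 hg₃)
    linear_combination -g₃ ^ 2 * h1
  have key3 : g₄' ^ 3 * t₀ ^ 12 = g₄ ^ 3 := by
    have h3 := (div_eq_div_iff (pow_ne_zero 4 hg₃) (pow_ne_zero 4 hg₃')).mp h₃
    rw [hg3'] at h3
    field_simp at h3
    apply mul_right_cancel₀ (pow_ne_zero 4 hg₃)
    linear_combination -g₃ ^ 4 * h3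
  have key2 : g₂ * g₄ = g₂' * g₄' * t₀ ^ 6 := by
    have h2 := (div_eq_div_iff (pow_ne_zero 2 hg₃) (pow_ne_zero 2 hg₃')).mp h₂
    rw [hg3'] at h2
    field_simp at h2
    apply mul_right_cancel₀ (pow_ne_zero 2 hg₃)
    linear_combination g₃ ^ 2 * h2
  by_cases hg2 : g₂ = 0
  · have hg2' : g₂' = 0 := by
      have h0 : g₂' ^ 3 * t₀ ^ 6 = 0 := by rw [key1, hg2]; ring
      rcases mul_eq_zero.mp h0 with h | h
      · exact pow_eq_zero_iff (by norm_num) |>.mp h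
      · exact absurd (pow_eq_zero_iff (by norm_num) |>.mp h) ht₀0
    by_cases hg4 : g₄ = 0
    · have hg4' : g₄' = 0 := by
        have h0 : g₄' ^ 3 * t₀ ^ 12 = 0 := by rw [key3, hg4]; ring
        rcases mul_eq_zero.mp h0 with h | h
        · exact pow_eq_zero_iff (by norm_num) |>.mp h
        · exact absurd (pow_eq_zero_iff (by norm_num) |>.mp h) ht₀0
      refine ⟨t₀, ht₀0, ?_, hg3', ?_, ?_⟩
      · rw [hg2, hg2']; simp
      · rw [hg4, hg4']; simp
      · exact IsAlgClosed.exists_pow_nat_eq (k := k) (t₀ ^ 4) (n := 3) (by norm_num)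
    · set ω : k := g₄' * t₀ ^ 4 / g₄ with hω
      have hω3 : ω ^ 3 = 1 := by
        rw [hω, div_pow, div_eq_one_iff_eq (pow_ne_zero 3 hg4)]
        linear_combination key3
      have hω0 : ω ≠ 0 := by
        intro h; rw [h] at hω3; simp at hω3
      have hkey : g₄' * t₀ ^ 4 = ω * g₄ := by
        rw [hω, div_mul_cancel₀ _ hg4]
      set t : k := ω ^ 2 * t₀ with ht
      have ht0 : t ≠ 0 := mul_ne_zero (pow_ne_zero 2 hω0) ht₀0
      refine ⟨t, ht0, ?_, ?_, ?_, ?_⟩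
      · rw [hg2, hg2']; simp
      · rw [hg3', ht]
        rw [div_eq_div_iff (pow_ne_zero 3 ht₀0) (pow_ne_zero 3 (mul_ne_zero (pow_ne_zero 2 hω0) ht₀0))]
        linear_combination g₃ * t₀ ^ 3 * (ω ^ 3 + 1) * hω3
      · rw [ht, eq_div_iff (pow_ne_zero 4 (mul_ne_zero (pow_ne_zero 2 hω0) ht₀0))]
        linear_combination ω ^ 8 * hkey + g₄ * (ω ^ 6 + ω ^ 3 + 1) * hω3
      · exact IsAlgClosed.exists_pow_nat_eq (k := k) (t ^ 4) (n := 3) (by norm_num)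
  · set ω : k := g₂' * t₀ ^ 2 / g₂ with hω
    have hω3 : ω ^ 3 = 1 := by
      rw [hω, div_pow, div_eq_one_iff_eq (pow_ne_zero 3 hg2)]
      linear_combination key1
    have hω0 : ω ≠ 0 := by
      intro h; rw [h] at hω3; simp at hω3
    have hkey : g₂' * t₀ ^ 2 = ω * g₂ := by
      rw [hω, div_mul_cancel₀ _ hg2]
    set t : k := ω * t₀ with ht
    have ht0 : t ≠ 0 := mul_ne_zero hω0 ht₀0
    have hg2'' : g₂' = g₂ / t ^ 2 := by
      rw [ht, eq_div_iff (pow_ne_zero 2 (mul_ne_zero hω0 ht₀0))]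
      linear_combination ω ^ 2 * hkey + g₂ * hω3
    refine ⟨t, ht0, hg2'', ?_, ?_, ?_⟩
    · rw [hg3', ht]
      rw [div_eq_div_iff (pow_ne_zero 3 ht₀0) (pow_ne_zero 3 (mul_ne_zero hω0 ht₀0))]
      linear_combination g₃ * t₀ ^ 3 * hω3
    · rw [ht, eq_div_iff (pow_ne_zero 4 (mul_ne_zero hω0 ht₀0))]
      have h5 : g₄ = ω * g₄' * t₀ ^ 4 := by
        apply mul_left_cancel₀ hg2
        linear_combination key2 + g₄' * t₀ ^ 4 * hkey
      linear_combination (-ω ^ 3) * h5 + g₄ * hω3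
    · exact IsAlgClosed.exists_pow_nat_eq (k := k) (t ^ 4) (n := 3) (by norm_num)
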